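/- Let Ω be a set, σ : ℝ → ℝ differentiable, and u : Ω × ℝ^p → ℝ^q with ψ ↦ u(x, ψ) differentiable for each x ∈ Ω. For a ∈ ℝ^r, W ∈ ℝ^{r×q}, b ∈ ℝ^r define F(x; ψ, W, b, a) = Σᵢ₌₁ʳ aᵢ σ(⟨Wᵢ, u(x, ψ)⟩ + bᵢ) and the doubled network F'(x; ψ, W, b, a, W̃, b̃, ã) = Σᵢ₌₁ʳ aᵢ σ(⟨Wᵢ, u(x, ψ)⟩ + bᵢ) + Σᵢ₌₁ʳ ãᵢ σ(⟨W̃ᵢ, u(x, ψ)⟩ + b̃ᵢ). At the doubling initialization W̃ = W, b̃ = b, ã = −a, for all x, x' ∈ Ω the last-two-layer kernel contributions double: ⟨∇_{(W, W̃)} F'(x), ∇_{(W, W̃)} F'(x')⟩ = 2 ⟨∇_W F(x), ∇_W F(x')⟩, ⟨∇_{(b, b̃)} F'(x), ∇_{(b, b̃)} F'(x')⟩ = 2 ⟨∇_b F(x), ∇_b F(x')⟩, and ⟨∇_{(a, ã)} F'(x), ∇_{(a, ã)} F'(x')⟩ = 2 ⟨∇_a F(x), ∇_a F(x')⟩, where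 gradients of F are evaluated at (ψ, W, b, a) and gradients of F' at the doubling initialization. -/

import Mathlib

section Aux

variable {q r : ℕ}

private lemma aux1 (σ : ℝ → ℝ) (hσ : Differentiable ℝ σ) (A c d : ℝ) :
    HasDerivAt (fun t : ℝ => A * σ (c + t * d)) (A * (deriv σ c * d)) 0 := by
  have h1 : HasDerivAt (fun t : ℝ => c + t * d) d 0 := by
    simpa using ((hasDerivAt_id (0:ℝ)).mul_const d).const_add c
  have h2 : HasDerivAt σ (deriv σ c) (c + 0 * d) := by
    simpa using (hσ c).hasDerivAt
  simpa [mul_comm] using (h2.comp 0 h1).const_mul A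

private lemma coreW (σ : ℝ → ℝ) (hσ : Differentiable ℝ σ) (v : Fin q → ℝ) (b a : Fin r → ℝ)
    (W e : Fin r → Fin q → ℝ) :
    HasDerivAt (fun t : ℝ => ∑ k, a k * σ ((∑ l, (W k l + t * e k l) * v l) + b k))
      (∑ k, a k * (deriv σ ((∑ l, W k l * v l) + b k) * (∑ l, e k l * v l))) 0 := by
  have harg : ∀ (t : ℝ) (k : Fin r),
      (∑ l, (W k l + t * e k l) * v l) + b k
        = ((∑ l, W k l * v l) + b k) + t * (∑ l, e k l * v l) := by
    intro t k
    simp only [add_mul, Finset.sum_add_distrib, Finset.mul_sum]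
    ring_nf
  simp only [harg]
  exact HasDerivAt.fun_sum fun k _ => aux1 σ hσ (a k) _ _

private lemma coreB (σ : ℝ → ℝ) (hσ : Differentiable ℝ σ) (v : Fin q → ℝ) (b a e : Fin r → ℝ)
    (W : Fin r → Fin q → ℝ) :
    HasDerivAt (fun t : ℝ => ∑ k, a k * σ ((∑ l, W k l * v l) + (b k + t * e k)))
      (∑ k, a k * (deriv σ ((∑ l, W k l * v l) + b k) * e k)) 0 := by
  have harg : ∀ (t : ℝ) (k : Fin r),
      (∑ l, W k l * v l) + (b k + t * e k) = ((∑ l, W k l * v l) + b k) + t * e k := by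
    intro t k; ring
  simp only [harg]
  exact HasDerivAt.fun_sum fun k _ => aux1 σ hσ (a k) _ _

private lemma coreA (σ : ℝ → ℝ) (v : Fin q → ℝ) (b a e : Fin r → ℝ)
    (W : Fin r → Fin q → ℝ) :
    HasDerivAt (fun t : ℝ => ∑ k, (a k + t * e k) * σ ((∑ l, W k l * v l) + b k))
      (∑ k, e k * σ ((∑ l, W k l * v l) + b k)) 0 := by
  refine HasDerivAt.fun_sum fun k _ => ?_
  have h1 : HasDerivAt (fun t : ℝ => a k + t * e k) (e k) 0 := by
    simpa using ((hasDerivAt_id (0:ℝ)).mul_const (e k)).const_add (a k)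
  exact h1.mul_const _

private lemma fd_pairW (σ : ℝ → ℝ) (hσ : Differentiable ℝ σ) (v : Fin q → ℝ)
    (b₁ b₂ a₁ a₂ : Fin r → ℝ) (W e₁ e₂ : Fin r → Fin q → ℝ) :
    fderiv ℝ (fun Wp : (Fin r → Fin q → ℝ) × (Fin r → Fin q → ℝ) =>
      (∑ k, a₁ k * σ ((∑ l, Wp.1 k l * v l) + b₁ k))
        + ∑ k, a₂ k * σ ((∑ l, Wp.2 k l * v l) + b₂ k)) (W, W) (e₁, e₂)
    = (∑ k, a₁ k * (deriv σ ((∑ l, W k l * v l) + b₁ k) * (∑ l, e₁ k l * v l)))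
      + ∑ k, a₂ k * (deriv σ ((∑ l, W k l * v l) + b₂ k) * (∑ l, e₂ k l * v l)) := by
  have hdiff : DifferentiableAt ℝ (fun Wp : (Fin r → Fin q → ℝ) × (Fin r → Fin q → ℝ) =>
      (∑ k, a₁ k * σ ((∑ l, Wp.1 k l * v l) + b₁ k))
        + ∑ k, a₂ k * σ ((∑ l, Wp.2 k l * v l) + b₂ k)) (W, W) := by fun_prop
  rw [← hdiff.lineDeriv_eq_fderiv]
  refine Eq.trans ?_ ((coreW σ hσ v b₁ a₁ W e₁).add (coreW σ hσ v b₂ a₂ W e₂)).deriv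
  simp only [lineDeriv]
  rfl

private lemma fd_W (σ : ℝ → ℝ) (hσ : Differentiable ℝ σ) (v : Fin q → ℝ)
    (b a : Fin r → ℝ) (W e : Fin r → Fin q → ℝ) :
    fderiv ℝ (fun W0 : Fin r → Fin q → ℝ =>
      ∑ k, a k * σ ((∑ l, W0 k l * v l) + b k)) W e
    = ∑ k, a k * (deriv σ ((∑ l, W k l * v l) + b k) * (∑ l, e k l * v l)) := by
  have hdiff : DifferentiableAt ℝ (fun W0 : Fin r → Fin q → ℝ =>
      ∑ k, a k * σ ((∑ l, W0 k l * v l) + b k)) W := by fun_prop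
  rw [← hdiff.lineDeriv_eq_fderiv]
  refine Eq.trans ?_ (coreW σ hσ v b a W e).deriv
  simp only [lineDeriv]
  rfl

private lemma fd_pairB (σ : ℝ → ℝ) (hσ : Differentiable ℝ σ) (v : Fin q → ℝ)
    (b a₁ a₂ e₁ e₂ : Fin r → ℝ) (W : Fin r → Fin q → ℝ) :
    fderiv ℝ (fun bp : (Fin r → ℝ) × (Fin r → ℝ) =>
      (∑ k, a₁ k * σ ((∑ l, W k l * v l) + bp.1 k))
        + ∑ k, a₂ k * σ ((∑ l, W k l * v l) + bp.2 k)) (b, b) (e₁, e₂)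
    = (∑ k, a₁ k * (deriv σ ((∑ l, W k l * v l) + b k) * e₁ k))
      + ∑ k, a₂ k * (deriv σ ((∑ l, W k l * v l) + b k) * e₂ k) := by
  have hdiff : DifferentiableAt ℝ (fun bp : (Fin r → ℝ) × (Fin r → ℝ) =>
      (∑ k, a₁ k * σ ((∑ l, W k l * v l) + bp.1 k))
        + ∑ k, a₂ k * σ ((∑ l, W k l * v l) + bp.2 k)) (b, b) := by fun_prop
  rw [← hdiff.lineDeriv_eq_fderiv]
  refine Eq.trans ?_ ((coreB σ hσ v b a₁ e₁ W).add (coreB σ hσ v b a₂ e₂ W)).deriv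
  simp only [lineDeriv]
  rfl

private lemma fd_B (σ : ℝ → ℝ) (hσ : Differentiable ℝ σ) (v : Fin q → ℝ)
    (b a e : Fin r → ℝ) (W : Fin r → Fin q → ℝ) :
    fderiv ℝ (fun b0 : Fin r → ℝ =>
      ∑ k, a k * σ ((∑ l, W k l * v l) + b0 k)) b e
    = ∑ k, a k * (deriv σ ((∑ l, W k l * v l) + b k) * e k) := by
  have hdiff : DifferentiableAt ℝ (fun b0 : Fin r → ℝ =>
      ∑ k, a k * σ ((∑ l, W k l * v l) + b0 k)) b := by fun_prop
  rw [← hdiff.lineDeriv_eq_fderiv]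
  refine Eq.trans ?_ (coreB σ hσ v b a e W).deriv
  simp only [lineDeriv]
  rfl

private lemma fd_pairA (σ : ℝ → ℝ) (v : Fin q → ℝ)
    (b a₁ a₂ e₁ e₂ : Fin r → ℝ) (W : Fin r → Fin q → ℝ) :
    fderiv ℝ (fun ap : (Fin r → ℝ) × (Fin r → ℝ) =>
      (∑ k, ap.1 k * σ ((∑ l, W k l * v l) + b k))
        + ∑ k, ap.2 k * σ ((∑ l, W k l * v l) + b k)) (a₁, a₂) (e₁, e₂)
    = (∑ k, e₁ k * σ ((∑ l, W k l * v l) + b k))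
      + ∑ k, e₂ k * σ ((∑ l, W k l * v l) + b k) := by
  have hdiff : DifferentiableAt ℝ (fun ap : (Fin r → ℝ) × (Fin r → ℝ) =>
      (∑ k, ap.1 k * σ ((∑ l, W k l * v l) + b k))
        + ∑ k, ap.2 k * σ ((∑ l, W k l * v l) + b k)) (a₁, a₂) := by fun_prop
  rw [← hdiff.lineDeriv_eq_fderiv]
  refine Eq.trans ?_ ((coreA σ v b a₁ e₁ W).add (coreA σ v b a₂ e₂ W)).deriv
  simp only [lineDeriv]
  rfl

private lemma fd_A (σ : ℝ → ℝ) (v : Fin q → ℝ)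
    (b a e : Fin r → ℝ) (W : Fin r → Fin q → ℝ) :
    fderiv ℝ (fun a0 : Fin r → ℝ =>
      ∑ k, a0 k * σ ((∑ l, W k l * v l) + b k)) a e
    = ∑ k, e k * σ ((∑ l, W k l * v l) + b k) := by
  have hdiff : DifferentiableAt ℝ (fun a0 : Fin r → ℝ =>
      ∑ k, a0 k * σ ((∑ l, W k l * v l) + b k)) a := by fun_prop
  rw [← hdiff.lineDeriv_eq_fderiv]
  refine Eq.trans ?_ (coreA σ v b a e W).deriv
  simp only [lineDeriv]
  rfl

end Aux




/-- The original network: last hidden layer with input weights `W`, biases `b`, output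
weights `a`, on top of the lower-layer feature map `u` with parameters `ψ`. -/
noncomputable def Fnet {Ω : Type*} {p q r : ℕ} (σ : ℝ → ℝ)
    (u : Ω → (Fin p → ℝ) → Fin q → ℝ) (x : Ω) (ψ : Fin p → ℝ)
    (W : Fin r → Fin q → ℝ) (b a : Fin r → ℝ) : ℝ :=
  ∑ i, a i * σ ((∑ j, W i j * u x ψ j) + b i)

/-- The doubled network: the last hidden layer is duplicated, the lower layers
(parameters `ψ`) are shared. -/
noncomputable def Fnet' {Ω : Type*} {p q r : ℕ} (σ : ℝ → ℝ)
    (u : Ω → (Fin p → ℝ) → Fin q → ℝ) (x : Ω) (ψ : Fin p → ℝ)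
    (W : Fin r → Fin q → ℝ) (b a : Fin r → ℝ)
    (W' : Fin r → Fin q → ℝ) (b' a' : Fin r → ℝ) : ℝ :=
  Fnet σ u x ψ W b a + Fnet σ u x ψ W' b' a'

/-- The "doubling trick" at initialization `W̃ = W, b̃ = b, ã = -a`: the neural tangent
kernel contributions of the last hidden layer's input weights `(W, W̃)`, its biases
`(b, b̃)` and the output weights `(a, ã)` are exactly doubled relative to the original
network. The joint gradients over the doubled parameter groups are expressed through
the partial derivatives in each coordinate direction. -/
theorem stmt15 {Ω : Type*} {p q r : ℕ} (σ : ℝ → ℝ) (hσ : Differentiable ℝ σ)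
    (u : Ω → (Fin p → ℝ) → Fin q → ℝ) (hu : ∀ x : Ω, Differentiable ℝ (u x))
    (ψ : Fin p → ℝ) (W : Fin r → Fin q → ℝ) (b a : Fin r → ℝ) :
    (∀ x x' : Ω,
      ((∑ i, ∑ j,
        fderiv ℝ (fun Wp : (Fin r → Fin q → ℝ) × (Fin r → Fin q → ℝ) =>
          Fnet' σ u x ψ Wp.1 b a Wp.2 b (-a)) (W, W) (Pi.single i (Pi.single j 1), 0) *
        fderiv ℝ (fun Wp : (Fin r → Fin q → ℝ) × (Fin r → Fin q → ℝ) =>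
          Fnet' σ u x' ψ Wp.1 b a Wp.2 b (-a)) (W, W) (Pi.single i (Pi.single j 1), 0))
      + ∑ i, ∑ j,
        fderiv ℝ (fun Wp : (Fin r → Fin q → ℝ) × (Fin r → Fin q → ℝ) =>
          Fnet' σ u x ψ Wp.1 b a Wp.2 b (-a)) (W, W) (0, Pi.single i (Pi.single j 1)) *
        fderiv ℝ (fun Wp : (Fin r → Fin q → ℝ) × (Fin r → Fin q → ℝ) =>
          Fnet' σ u x' ψ Wp.1 b a Wp.2 b (-a)) (W, W) (0, Pi.single i (Pi.single j 1)))
      = 2 * ∑ i, ∑ j,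
          fderiv ℝ (fun W0 => Fnet σ u x ψ W0 b a) W (Pi.single i (Pi.single j 1)) *
          fderiv ℝ (fun W0 => Fnet σ u x' ψ W0 b a) W (Pi.single i (Pi.single j 1))) ∧
    (∀ x x' : Ω,
      ((∑ i,
        fderiv ℝ (fun bp : (Fin r → ℝ) × (Fin r → ℝ) =>
          Fnet' σ u x ψ W bp.1 a W bp.2 (-a)) (b, b) (Pi.single i 1, 0) *
        fderiv ℝ (fun bp : (Fin r → ℝ) × (Fin r → ℝ) =>
          Fnet' σ u x' ψ W bp.1 a W bp.2 (-a)) (b, b) (Pi.single i 1, 0))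
      + ∑ i,
        fderiv ℝ (fun bp : (Fin r → ℝ) × (Fin r → ℝ) =>
          Fnet' σ u x ψ W bp.1 a W bp.2 (-a)) (b, b) (0, Pi.single i 1) *
        fderiv ℝ (fun bp : (Fin r → ℝ) × (Fin r → ℝ) =>
          Fnet' σ u x' ψ W bp.1 a W bp.2 (-a)) (b, b) (0, Pi.single i 1))
      = 2 * ∑ i,
          fderiv ℝ (fun b0 => Fnet σ u x ψ W b0 a) b (Pi.single i 1) *
          fderiv ℝ (fun b0 => Fnet σ u x' ψ W b0 a) b (Pi.single i 1)) ∧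
    (∀ x x' : Ω,
      ((∑ i,
        fderiv ℝ (fun ap : (Fin r → ℝ) × (Fin r → ℝ) =>
          Fnet' σ u x ψ W b ap.1 W b ap.2) (a, -a) (Pi.single i 1, 0) *
        fderiv ℝ (fun ap : (Fin r → ℝ) × (Fin r → ℝ) =>
          Fnet' σ u x' ψ W b ap.1 W b ap.2) (a, -a) (Pi.single i 1, 0))
      + ∑ i,
        fderiv ℝ (fun ap : (Fin r → ℝ) × (Fin r → ℝ) =>
          Fnet' σ u x ψ W b ap.1 W b ap.2) (a, -a) (0, Pi.single i 1) *
        fderiv ℝ (fun ap : (Fin r → ℝ) × (Fin r → ℝ) =>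
          Fnet' σ u x' ψ W b ap.1 W b ap.2) (a, -a) (0, Pi.single i 1))
      = 2 * ∑ i,
          fderiv ℝ (fun a0 => Fnet σ u x ψ W b a0) a (Pi.single i 1) *
          fderiv ℝ (fun a0 => Fnet σ u x' ψ W b a0) a (Pi.single i 1)) := by
  refine ⟨fun x x' => ?_, fun x x' => ?_, fun x x' => ?_⟩
  · simp only [Fnet', Fnet]
    simp only [fd_pairW σ hσ, fd_W σ hσ]
    simp [Pi.single_apply, ite_mul, mul_ite, Finset.sum_ite_eq', two_mul]
  · simp only [Fnet', Fnet]
    simp only [fd_pairB σ hσ, fd_B σ hσ]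
    simp [Pi.single_apply, ite_mul, mul_ite, Finset.sum_ite_eq', two_mul]
  · simp only [Fnet', Fnet]
    simp only [fd_pairA σ, fd_A σ]
    simp [Pi.single_apply, ite_mul, mul_ite, Finset.sum_ite_eq', two_mul]
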